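/- Fix ψ ∈ H^∞ not identically zero. A map T : ψH^∞ → ψH^∞ is an algebra automorphism (bijective, ℂ-linear and multiplicative) if and only if there exist φ ∈ Aut(𝔻) and an invertible element g of H^∞ (g ∈ H^∞ with g·h ≡ 1 on 𝔻 for some h ∈ H^∞) such that ψ ∘ φ = ψ·g and T f = f ∘ φ for all f ∈ ψH^∞. -/

import Mathlib

open Complex Metric Set

local notation "𝔻" => Complex.UnitDisc

/-- The closed unit disc, as a subset of `ℂ`. -/
def cD : Set ℂ := Metric.closedBall 0 1

/-- A function on the open unit disc is analytic (holomorphic):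
it is the restriction of a function differentiable on the open unit ball. -/
def HolOn (f : 𝔻 → ℂ) : Prop :=
  ∃ F : ℂ → ℂ, DifferentiableOn ℂ F (Metric.ball 0 1) ∧ ∀ z : 𝔻, F ↑z = f z

/-- Membership in `H^∞`, the algebra of bounded analytic functions on the unit disc. -/
def MemHinf (f : 𝔻 → ℂ) : Prop :=
  HolOn f ∧ ∃ M : ℝ, ∀ z : 𝔻, ‖f z‖ ≤ M

/-- Membership in the disc algebra `A(𝔻)`: continuous on the closed unit disc,
analytic in its interior. -/
def MemDiscAlg (f : ↥cD → ℂ) : Prop :=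
  ∃ F : ℂ → ℂ, ContinuousOn F cD ∧ DifferentiableOn ℂ F (Metric.ball 0 1) ∧
    ∀ z : ↥cD, F ↑z = f z

/-- `φ ∈ Aut(𝔻)`: a bijective analytic self-map of the unit disc. -/
def IsDiscAut (φ : 𝔻 → 𝔻) : Prop :=
  (∃ F : ℂ → ℂ, DifferentiableOn ℂ F (Metric.ball 0 1) ∧ ∀ z : 𝔻, F ↑z = ↑(φ z)) ∧
  Function.Bijective φ

/-- A Möbius automorphism of the unit disc, given by its global formula
`Φ z = η (a - z) / (1 - conj a * z)` with `|a| < 1`, `|η| = 1`; this is the analytic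
extension to (a neighbourhood of) the closed unit disc of a disc automorphism. -/
def IsMobius (Φ : ℂ → ℂ) : Prop :=
  ∃ a η : ℂ, ‖a‖ < 1 ∧ ‖η‖ = 1 ∧
    ∀ z : ℂ, Φ z = η * (a - z) / (1 - (starRingEnd ℂ) a * z)

/-- `T` is an algebra automorphism of the set `A` of complex-valued functions:
a bijective, `ℂ`-linear and multiplicative self-map of `A`. -/
def IsAlgAutOn {ι : Type} (A : Set (ι → ℂ)) (T : (ι → ℂ) → (ι → ℂ)) : Prop :=
  (∀ f ∈ A, T f ∈ A) ∧
  (∀ f ∈ A, ∀ g ∈ A, T (f + g) = T f + T g) ∧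
  (∀ (c : ℂ), ∀ f ∈ A, T (c • f) = c • T f) ∧
  (∀ f ∈ A, ∀ g ∈ A, T (f * g) = T f * T g) ∧
  Set.InjOn T A ∧ Set.SurjOn T A A

/-- The subalgebra `ψ H^∞ = {ψ · g : g ∈ H^∞}`. -/
def psiH (ψ : 𝔻 → ℂ) : Set (𝔻 → ℂ) :=
  {f | ∃ g, MemHinf g ∧ f = fun z => ψ z * g z}

/-- The subalgebra `ψ A(𝔻) = {ψ · g : g ∈ A(𝔻)}`. -/
def psiA (ψ : ↥cD → ℂ) : Set (↥cD → ℂ) :=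
  {f | ∃ g, MemDiscAlg g ∧ f = fun z => ψ z * g z}

/-- The composition operator `C_φ : f ↦ f ∘ φ` is a well-defined algebra automorphism
of the set `A` (it is automatically linear and multiplicative). -/
def CompAutOn (A : Set (𝔻 → ℂ)) (φ : 𝔻 → 𝔻) : Prop :=
  (∀ f ∈ A, f ∘ φ ∈ A) ∧ Set.InjOn (fun f => f ∘ φ) A ∧ Set.SurjOn (fun f => f ∘ φ) A A

/-- The Möbius factor `τ_a(z) = (a - z)/(1 - conj a · z)`. -/
noncomputable def mobius (a z : ℂ) : ℂ := (a - z) / (1 - (starRingEnd ℂ) a * z)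

/-- `f` has a zero of order (multiplicity) `k` at `w`:
`f z = (z - w)^k g z` with `g` analytic and `g w ≠ 0`. -/
def ZeroOrderAt (f : 𝔻 → ℂ) (w : 𝔻) (k : ℕ) : Prop :=
  ∃ g : 𝔻 → ℂ, HolOn g ∧ g w ≠ 0 ∧ ∀ z : 𝔻, f z = ((z : ℂ) - (w : ℂ)) ^ k * g z

/-- `g` is an invertible element of `H^∞`. -/
def InvHinf (g : 𝔻 → ℂ) : Prop :=
  MemHinf g ∧ ∃ h : 𝔻 → ℂ, MemHinf h ∧ ∀ z, g z * h z = 1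

/-- `g` is an invertible element of the disc algebra `A(𝔻)`. -/
def InvDiscAlg (g : ↥cD → ℂ) : Prop :=
  MemDiscAlg g ∧ ∃ h : ↥cD → ℂ, MemDiscAlg h ∧ ∀ z, g z * h z = 1


section AuxLemmas
open Filter Topology

lemma disc_mem_ball (z : 𝔻) : (z : ℂ) ∈ ball (0:ℂ) 1 := z.2

lemma ball_coe {x : ℂ} (hx : x ∈ ball (0:ℂ) 1) : ∃ z : 𝔻, (z:ℂ) = x :=
  ⟨Complex.UnitDisc.mk x (mem_ball_zero_iff.1 hx), rfl⟩

lemma memHinf_const (c : ℂ) : MemHinf (fun _ => c) :=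
  ⟨⟨fun _ => c, differentiableOn_const c, fun _ => rfl⟩, ⟨‖c‖, fun _ => le_rfl⟩⟩

lemma memHinf_id : MemHinf (fun z : 𝔻 => (z : ℂ)) :=
  ⟨⟨id, differentiableOn_id, fun _ => rfl⟩, ⟨1, fun z => (z.norm_lt_one).le⟩⟩

lemma memHinf_add {f g : 𝔻 → ℂ} (hf : MemHinf f) (hg : MemHinf g) :
    MemHinf (fun z => f z + g z) := by
  obtain ⟨⟨F, hF, hFv⟩, M, hM⟩ := hf
  obtain ⟨⟨G, hG, hGv⟩, N, hN⟩ := hg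
  exact ⟨⟨F + G, hF.add hG, fun z => by simp [hFv z, hGv z]⟩,
    ⟨M + N, fun z => (norm_add_le _ _).trans (add_le_add (hM z) (hN z))⟩⟩

lemma memHinf_mul {f g : 𝔻 → ℂ} (hf : MemHinf f) (hg : MemHinf g) :
    MemHinf (fun z => f z * g z) := by
  obtain ⟨⟨F, hF, hFv⟩, M, hM⟩ := hf
  obtain ⟨⟨G, hG, hGv⟩, N, hN⟩ := hg
  refine ⟨⟨F * G, hF.mul hG, fun z => by simp [hFv z, hGv z]⟩,
    ⟨M * N, fun z => ?_⟩⟩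
  rw [norm_mul]
  have h0 : (0:ℝ) ≤ ‖f z‖ := norm_nonneg _
  have h1 : (0:ℝ) ≤ ‖g z‖ := norm_nonneg _
  exact mul_le_mul (hM z) (hN z) h1 ((norm_nonneg _).trans (hM z))

lemma memHinf_smul (c : ℂ) {f : 𝔻 → ℂ} (hf : MemHinf f) : MemHinf (fun z => c * f z) :=
  memHinf_mul (memHinf_const c) hf

lemma memHinf_comp {a : 𝔻 → ℂ} (ha : MemHinf a) (φ : 𝔻 → 𝔻) {F : ℂ → ℂ}
    (hF : DifferentiableOn ℂ F (ball 0 1)) (hFφ : ∀ z : 𝔻, F ↑z = ↑(φ z)) :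
    MemHinf (fun z => a (φ z)) := by
  obtain ⟨⟨A, hA, hAv⟩, M, hM⟩ := ha
  have hmaps : MapsTo F (ball (0:ℂ) 1) (ball (0:ℂ) 1) := by
    intro x hx
    obtain ⟨z, rfl⟩ := ball_coe hx
    rw [hFφ z]; exact disc_mem_ball _
  refine ⟨⟨A ∘ F, hA.comp hF hmaps, fun z => by simp [Function.comp, hFφ z, hAv]⟩, M, fun z => hM _⟩

lemma aux_punct {Q : ℂ → ℂ} (hQ : DifferentiableOn ℂ Q (ball 0 1))
    (hne : ∃ x ∈ ball (0:ℂ) 1, Q x ≠ 0) {c : ℂ} (hc : c ∈ ball (0:ℂ) 1) :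
    ∀ᶠ x in 𝓝[≠] c, x ∈ ball (0:ℂ) 1 ∧ Q x ≠ 0 := by
  have han : AnalyticOnNhd ℂ Q (ball 0 1) := hQ.analyticOnNhd isOpen_ball
  have h1 : ∀ᶠ x in 𝓝[≠] c, Q x ≠ 0 := by
    rcases (han c hc).eventually_eq_zero_or_eventually_ne_zero with h | h
    · exfalso
      obtain ⟨x, hx, hx0⟩ := hne
      exact hx0 (han.eqOn_zero_of_preconnected_of_eventuallyEq_zero
        (convex_ball _ _).isPreconnected hc h hx)
    · exact h
  have h2 : ∀ᶠ x in 𝓝[≠] c, x ∈ ball (0:ℂ) 1 :=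
    eventually_nhdsWithin_of_eventually_nhds (isOpen_ball.eventually_mem hc)
  exact h1.and h2 |>.mono fun x hx => ⟨hx.2, hx.1⟩

lemma aux_ident {A B Q : ℂ → ℂ} (hA : DifferentiableOn ℂ A (ball 0 1))
    (hB : DifferentiableOn ℂ B (ball 0 1)) (hQ : DifferentiableOn ℂ Q (ball 0 1))
    (hne : ∃ x ∈ ball (0:ℂ) 1, Q x ≠ 0)
    (h : ∀ x ∈ ball (0:ℂ) 1, Q x ≠ 0 → A x = B x) :
    ∀ x ∈ ball (0:ℂ) 1, A x = B x := by
  intro c hc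
  by_cases hQc : Q c ≠ 0
  · exact h c hc hQc
  have heq : A =ᶠ[𝓝[≠] c] B :=
    (aux_punct hQ hne hc).mono fun x hx => h x hx.1 hx.2
  have hAc : Tendsto A (𝓝[≠] c) (𝓝 (A c)) :=
    ((hA.differentiableAt (isOpen_ball.mem_nhds hc)).continuousAt).continuousWithinAt
  have hBc : Tendsto B (𝓝[≠] c) (𝓝 (B c)) :=
    ((hB.differentiableAt (isOpen_ball.mem_nhds hc)).continuousAt).continuousWithinAt
  exact tendsto_nhds_unique (hAc.congr' heq) hBc

lemma aux_div {Q1 Q2 : ℂ → ℂ} (h1 : DifferentiableOn ℂ Q1 (ball 0 1))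
    (h2 : DifferentiableOn ℂ Q2 (ball 0 1))
    (hne : ∃ x ∈ ball (0:ℂ) 1, Q2 x ≠ 0)
    (hle : ∀ x ∈ ball (0:ℂ) 1, Q2 x ≠ 0 → ‖Q1 x‖ ≤ ‖Q2 x‖) :
    ∃ F : ℂ → ℂ, DifferentiableOn ℂ F (ball 0 1) ∧
      ∀ x ∈ ball (0:ℂ) 1, ‖F x‖ ≤ 1 ∧ Q1 x = F x * Q2 x := by
  classical
  set F0 : ℂ → ℂ := fun x => Q1 x / Q2 x with hF0
  set F : ℂ → ℂ := fun x => if Q2 x = 0 then limUnder (𝓝[≠] x) F0 else F0 x with hF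
  have hbd0 : ∀ x ∈ ball (0:ℂ) 1, Q2 x ≠ 0 → ‖F0 x‖ ≤ 1 := by
    intro x hx hx0
    rw [hF0]
    simp only [norm_div]
    rcases eq_or_lt_of_le (norm_nonneg (Q2 x)) with h0 | h0
    · exact absurd (norm_eq_zero.mp h0.symm) hx0
    rw [div_le_one h0]
    exact hle x hx hx0
  -- main case analysis at a point c in the ball
  have key : ∀ c ∈ ball (0:ℂ) 1, Q2 c = 0 →
      DifferentiableAt ℂ F c ∧ Tendsto F0 (𝓝[≠] c) (𝓝 (F c)) := by
    intro c hc hc0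
    obtain ⟨t, ht, hts⟩ := eventually_nhdsWithin_iff.mp (aux_punct h2 hne hc) |>.exists_mem
    set U := interior t ∩ ball (0:ℂ) 1 with hU
    have hUopen : IsOpen U := isOpen_interior.inter isOpen_ball
    have hcU : c ∈ U := ⟨mem_interior_iff_mem_nhds.2 ht, hc⟩
    have hUprop : ∀ x ∈ U, x ≠ c → Q2 x ≠ 0 := fun x hx hxc =>
      (hts x (interior_subset hx.1) hxc).2
    have hUnhds : U ∈ 𝓝 c := hUopen.mem_nhds hcU
    have hdiff : DifferentiableOn ℂ F0 (U \ {c}) := by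
      intro x hx
      have hx0 : Q2 x ≠ 0 := hUprop x hx.1 hx.2
      exact ((h1.differentiableAt (isOpen_ball.mem_nhds hx.1.2)).div
        (h2.differentiableAt (isOpen_ball.mem_nhds hx.1.2)) hx0).differentiableWithinAt
    have hbdd : BddAbove (norm ∘ F0 '' (U \ {c})) := by
      refine ⟨1, fun y hy => ?_⟩
      obtain ⟨x, hx, rfl⟩ := hy
      exact hbd0 x hx.1.2 (hUprop x hx.1 hx.2)
    have H := Complex.differentiableOn_update_limUnder_of_bddAbove hUnhds hdiff hbdd
    have heq : ∀ x ∈ U, F x = Function.update F0 c (limUnder (𝓝[≠] c) F0) x := by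
      intro x hx
      by_cases hxc : x = c
      · subst hxc; simp [hF, hc0, Function.update_self]
      · rw [Function.update_of_ne hxc, hF]
        simp only
        rw [if_neg]
        exact fun h => (hUprop x hx hxc) h
    have hFc : F c = limUnder (𝓝[≠] c) F0 := by simp [hF, hc0]
    have hdF : DifferentiableAt ℂ F c := by
      have h1' : DifferentiableAt ℂ (Function.update F0 c (limUnder (𝓝[≠] c) F0)) c :=
        H.differentiableAt hUnhds
      exact h1'.congr_of_eventuallyEq (eventually_of_mem hUnhds heq)
    have htd : Tendsto F0 (𝓝[≠] c) (𝓝 (F c)) := by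
      rw [hFc]
      have := (H.differentiableAt hUnhds).continuousAt
      exact continuousAt_update_same.mp this
    exact ⟨hdF, htd⟩
  have hdiffAt : ∀ c ∈ ball (0:ℂ) 1, DifferentiableAt ℂ F c := by
    intro c hc
    by_cases hc0 : Q2 c = 0
    · exact (key c hc hc0).1
    · have hev : F =ᶠ[𝓝 c] F0 := by
        have hcont : ContinuousAt Q2 c := (h2.differentiableAt (isOpen_ball.mem_nhds hc)).continuousAt
        filter_upwards [hcont.eventually_ne hc0] with x hx
        simp [hF, hx]
      have : DifferentiableAt ℂ F0 c :=
        (h1.differentiableAt (isOpen_ball.mem_nhds hc)).div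
          (h2.differentiableAt (isOpen_ball.mem_nhds hc)) hc0
      exact this.congr_of_eventuallyEq hev
  refine ⟨F, fun c hc => (hdiffAt c hc).differentiableWithinAt, ?_⟩
  intro x hx
  by_cases hx0 : Q2 x = 0
  · obtain ⟨-, htd⟩ := key x hx hx0
    constructor
    · refine le_of_tendsto (htd.norm) ?_
      filter_upwards [aux_punct h2 hne hx] with y hy
      exact hbd0 y hy.1 hy.2
    · -- Q1 x = 0
      have hQ1 : Tendsto Q1 (𝓝[≠] x) (𝓝 (Q1 x)) :=
        ((h1.differentiableAt (isOpen_ball.mem_nhds hx)).continuousAt).continuousWithinAt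
      have hQ2 : Tendsto Q2 (𝓝[≠] x) (𝓝 (0:ℂ)) := by
        have := ((h2.differentiableAt (isOpen_ball.mem_nhds hx)).continuousAt).continuousWithinAt
          (s := {x}ᶜ)
        unfold ContinuousWithinAt at this
        rwa [hx0] at this
      have hprod : Tendsto (fun y => F0 y * Q2 y) (𝓝[≠] x) (𝓝 (F x * 0)) := htd.mul hQ2
      have heq' : (fun y => F0 y * Q2 y) =ᶠ[𝓝[≠] x] Q1 := by
        filter_upwards [aux_punct h2 hne hx] with y hy
        simp only [hF0]; exact div_mul_cancel₀ _ hy.2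
      have : Tendsto Q1 (𝓝[≠] x) (𝓝 (F x * 0)) := hprod.congr' heq'
      have hQ1x : Q1 x = F x * 0 := tendsto_nhds_unique hQ1 this
      rw [hQ1x, hx0]
  · have hFx : F x = F0 x := by simp [hF, hx0]
    refine ⟨hFx ▸ hbd0 x hx hx0, ?_⟩
    rw [hFx, hF0]
    field_simp

lemma memHinf_dslope {f : 𝔻 → ℂ} (hf : MemHinf f) (u : 𝔻) :
    ∃ q : 𝔻 → ℂ, MemHinf q ∧ ∀ z : 𝔻, f z = f u + ((z:ℂ) - (u:ℂ)) * q z := by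
  obtain ⟨⟨Ff, hFd, hFv⟩, M, hM⟩ := hf
  have hM0 : 0 ≤ M := (norm_nonneg _).trans (hM u)
  set Q : ℂ → ℂ := dslope Ff ↑u with hQ
  have hu : (↑u : ℂ) ∈ ball (0:ℂ) 1 := disc_mem_ball u
  have hQd : DifferentiableOn ℂ Q (ball 0 1) :=
    (differentiableOn_dslope (isOpen_ball.mem_nhds hu)).mpr hFd
  set r : ℝ := (1 - ‖(u:ℂ)‖) / 2 with hr
  have hrpos : 0 < r := by
    have := u.norm_lt_one; rw [hr]; linarith
  have hsub : closedBall (↑u : ℂ) r ⊆ ball (0:ℂ) 1 := by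
    intro x hx
    rw [mem_closedBall] at hx
    rw [mem_ball_zero_iff]
    calc ‖x‖ = ‖(x - ↑u) + ↑u‖ := by ring_nf
      _ ≤ ‖x - ↑u‖ + ‖(u:ℂ)‖ := norm_add_le _ _
      _ ≤ r + ‖(u:ℂ)‖ := by
          have : dist x ↑u = ‖x - u‖ := by rw [Complex.dist_eq]
          rw [this] at hx; linarith
      _ < 1 := by rw [hr]; have := u.norm_lt_one; linarith
  set C : ℝ := (M + M) / r with hC
  have hballnorm : ∀ x ∈ ball (0:ℂ) 1, ‖Ff x‖ ≤ M := by
    intro x hx; obtain ⟨z, rfl⟩ := ball_coe hx; rw [hFv z]; exact hM z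
  have hframe : ∀ x ∈ sphere (↑u:ℂ) r, ‖Q x‖ ≤ C := by
    intro x hx
    have hxne : x ≠ ↑u := by
      intro h; rw [mem_sphere, h, dist_self] at hx; exact hrpos.ne hx
    rw [hQ, dslope_of_ne _ hxne, slope_def_field]
    have hd : ‖x - ↑u‖ = r := by
      rw [mem_sphere, Complex.dist_eq] at hx; exact hx
    rw [div_eq_mul_inv, norm_mul, norm_inv]
    have hxball : x ∈ ball (0:ℂ) 1 := hsub (sphere_subset_closedBall hx)
    have h1 : ‖Ff x - Ff ↑u‖ ≤ M + M := by
      calc ‖Ff x - Ff ↑u‖ ≤ ‖Ff x‖ + ‖Ff ↑u‖ := norm_sub_le _ _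
        _ ≤ M + M := add_le_add (hballnorm x hxball) (hballnorm _ hu)
    have h2 : ‖x - (↑u:ℂ)‖ = r := hd
    rw [h2, hC]
    rw [div_eq_mul_inv]
    exact mul_le_mul_of_nonneg_right h1 (by positivity)
  have hmax : ∀ x ∈ closedBall (↑u:ℂ) r, ‖Q x‖ ≤ C := by
    intro x hx
    have hdc : DiffContOnCl ℂ Q (ball (↑u:ℂ) r) := by
      apply DifferentiableOn.diffContOnCl
      rw [closure_ball _ hrpos.ne']
      exact hQd.mono hsub
    exact Complex.norm_le_of_forall_mem_frontier_norm_le (U := ball (↑u:ℂ) r)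
      isBounded_ball hdc
      (fun zz hz => by rw [frontier_ball _ hrpos.ne'] at hz; exact hframe zz hz)
      (by rwa [closure_ball _ hrpos.ne'])
  refine ⟨fun z => Q ↑z, ⟨⟨Q, hQd, fun _ => rfl⟩, C, fun z => ?_⟩, fun z => ?_⟩
  · by_cases hz : (↑z:ℂ) ∈ closedBall (↑u:ℂ) r
    · exact hmax _ hz
    · have hzne : (↑z:ℂ) ≠ ↑u := by
        intro h; apply hz; rw [h]; exact mem_closedBall_self hrpos.le
      have hd : r ≤ ‖(↑z:ℂ) - ↑u‖ := by
        rw [mem_closedBall, Complex.dist_eq, not_le] at hz; exact (le_of_lt hz)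
      show ‖dslope Ff ↑u ↑z‖ ≤ C
      rw [dslope_of_ne _ hzne, slope_def_field, div_eq_mul_inv, norm_mul, norm_inv]
      have h1 : ‖Ff ↑z - Ff ↑u‖ ≤ M + M := by
        calc ‖Ff ↑z - Ff ↑u‖ ≤ ‖Ff ↑z‖ + ‖Ff ↑u‖ := norm_sub_le _ _
          _ ≤ M + M := add_le_add (hballnorm _ (disc_mem_ball z)) (hballnorm _ hu)
      have h2 : ‖((↑z:ℂ) - ↑u)‖⁻¹ ≤ r⁻¹ := by
        apply inv_anti₀ hrpos hd
      calc ‖Ff ↑z - Ff ↑u‖ * ‖((↑z:ℂ) - ↑u)‖⁻¹ ≤ (M + M) * r⁻¹ := by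
            apply mul_le_mul h1 h2 (by positivity) (by linarith)
        _ = C := by rw [hC, div_eq_mul_inv]
  · by_cases hzu : z = u
    · subst hzu; simp
    · have hne : (↑z:ℂ) ≠ ↑u := fun h => hzu (Complex.UnitDisc.coe_injective h)
      show f z = f u + ((z:ℂ) - ↑u) * dslope Ff ↑u ↑z
      rw [dslope_of_ne _ hne, slope_def_field, hFv, hFv]
      rw [mul_comm ((z:ℂ) - (u:ℂ)), div_mul_cancel₀ _ (sub_ne_zero.mpr hne)]
      ring

lemma char_abs_le (lam : (𝔻 → ℂ) → ℂ)
    (hadd : ∀ a b, MemHinf a → MemHinf b → lam (fun z => a z + b z) = lam a + lam b)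
    (hmul : ∀ a b, MemHinf a → MemHinf b → lam (fun z => a z * b z) = lam a * lam b)
    (hconst : ∀ c : ℂ, lam (fun _ => c) = c)
    {f : 𝔻 → ℂ} (hf : MemHinf f) {M : ℝ} (hM : ∀ z, ‖f z‖ ≤ M) :
    ‖lam f‖ ≤ M := by
  by_contra hlt
  push_neg at hlt
  set c : ℂ := lam f with hc
  have hM0 : 0 ≤ M := (norm_nonneg _).trans (hM (Complex.UnitDisc.mk 0 (by simp)))
  have hfc : ∀ z, f z - c ≠ 0 := by
    intro z h
    rw [sub_eq_zero] at h
    have := hM z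
    rw [h] at this
    exact absurd this (not_le.mpr hlt)
  have hsub : MemHinf (fun z => f z - c) := by
    have h := memHinf_add hf (memHinf_const (-c))
    have heq : (fun z => f z + (fun _ : 𝔻 => -c) z) = (fun z => f z - c) := by
      funext z; ring
    rwa [heq] at h
  have hg : MemHinf (fun z => (f z - c)⁻¹) := by
    obtain ⟨⟨Ff, hFd, hFv⟩, N, hN⟩ := hf
    refine ⟨⟨fun x => (Ff x - c)⁻¹, ?_, fun z => by simp only []; rw [hFv z]⟩, (‖c‖ - M)⁻¹, fun z => ?_⟩
    · apply DifferentiableOn.inv (hFd.sub (differentiableOn_const c))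
      intro x hx
      obtain ⟨z, rfl⟩ := ball_coe hx
      show Ff ↑z - c ≠ 0
      rw [hFv z]
      exact hfc z
    · rw [norm_inv]
      have h1 : ‖c‖ - M ≤ ‖f z - c‖ := by
        have h3 := hM z
        calc ‖c‖ - M ≤ ‖c‖ - ‖f z‖ := by linarith
          _ ≤ ‖c - f z‖ := norm_sub_norm_le c (f z)
          _ = ‖f z - c‖ := norm_sub_rev _ _
      exact inv_anti₀ (by linarith) h1
  have h1 : lam (fun z => (f z - c) * (f z - c)⁻¹) = 1 := by
    have heq : (fun z => (f z - c) * (f z - c)⁻¹) = (fun _ : 𝔻 => (1:ℂ)) := by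
      funext z; exact mul_inv_cancel₀ (hfc z)
    rw [heq, hconst]
  rw [hmul _ _ hsub hg] at h1
  have h2 : lam (fun z => f z - c) = 0 := by
    have heq : (fun z => f z - c) = (fun z => f z + (fun _ : 𝔻 => -c) z) := by funext z; ring
    rw [heq, hadd f _ hf (memHinf_const (-c)), hconst]
    simp [hc]
  rw [h2, zero_mul] at h1
  exact one_ne_zero h1.symm

lemma char_eval (lam : (𝔻 → ℂ) → ℂ)
    (hadd : ∀ a b, MemHinf a → MemHinf b → lam (fun z => a z + b z) = lam a + lam b)
    (hmul : ∀ a b, MemHinf a → MemHinf b → lam (fun z => a z * b z) = lam a * lam b)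
    (hconst : ∀ c : ℂ, lam (fun _ => c) = c)
    (u : 𝔻) (hu : lam (fun z : 𝔻 => (z:ℂ)) = ↑u)
    {f : 𝔻 → ℂ} (hf : MemHinf f) : lam f = f u := by
  obtain ⟨q, hq, hid⟩ := memHinf_dslope hf u
  have hlin : MemHinf (fun z : 𝔻 => (z:ℂ) - (u:ℂ)) := by
    have h := memHinf_add (⟨⟨id, differentiableOn_id, fun _ => rfl⟩, 1,
      fun z => z.norm_lt_one.le⟩ : MemHinf (fun z : 𝔻 => (z:ℂ))) (memHinf_const (-(u:ℂ)))
    have heq : (fun z : 𝔻 => (z:ℂ) + (fun _ : 𝔻 => -(u:ℂ)) z) = (fun z : 𝔻 => (z:ℂ) - (u:ℂ)) := by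
      funext z; ring
    rwa [heq] at h
  have hlam_lin : lam (fun z : 𝔻 => (z:ℂ) - (u:ℂ)) = 0 := by
    have heq : (fun z : 𝔻 => (z:ℂ) - (u:ℂ)) = (fun z : 𝔻 => (z:ℂ) + (fun _ : 𝔻 => -(u:ℂ)) z) := by
      funext z; ring
    rw [heq, hadd _ _ (⟨⟨id, differentiableOn_id, fun _ => rfl⟩, 1, fun z => z.norm_lt_one.le⟩ :
      MemHinf (fun z : 𝔻 => (z:ℂ))) (memHinf_const (-(u:ℂ))), hu, hconst]
    ring
  have heqf : f = (fun z => (fun _ : 𝔻 => f u) z + (fun z : 𝔻 => ((z:ℂ) - (u:ℂ)) * q z) z) := by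
    funext z; exact hid z
  have hprod : MemHinf (fun z : 𝔻 => ((z:ℂ) - (u:ℂ)) * q z) := memHinf_mul hlin hq
  calc lam f = lam (fun _ : 𝔻 => f u) + lam (fun z : 𝔻 => ((z:ℂ) - (u:ℂ)) * q z) := by
        rw [← hadd _ _ (memHinf_const (f u)) hprod, ← heqf]
    _ = f u + lam (fun z : 𝔻 => (z:ℂ) - (u:ℂ)) * lam q := by
        rw [hconst, hmul _ _ hlin hq]
    _ = f u := by rw [hlam_lin]; ring

lemma psiH_memHinf {ψ f : 𝔻 → ℂ} (hψ : MemHinf ψ) (hf : f ∈ psiH ψ) : MemHinf f := by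
  obtain ⟨g, hg, rfl⟩ := hf; exact memHinf_mul hψ hg

lemma psiH_zero (ψ : 𝔻 → ℂ) : (0 : 𝔻 → ℂ) ∈ psiH ψ :=
  ⟨fun _ => 0, memHinf_const 0, by funext z; simp⟩

lemma psiH_add {ψ f g : 𝔻 → ℂ} (hf : f ∈ psiH ψ) (hg : g ∈ psiH ψ) : f + g ∈ psiH ψ := by
  obtain ⟨a, ha, rfl⟩ := hf; obtain ⟨b, hb, rfl⟩ := hg
  exact ⟨fun z => a z + b z, memHinf_add ha hb, by funext z; simp [mul_add]⟩

lemma psiH_mul {ψ f g : 𝔻 → ℂ} (hψ : MemHinf ψ) (hf : f ∈ psiH ψ) (hg : g ∈ psiH ψ) :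
    f * g ∈ psiH ψ := by
  obtain ⟨a, ha, rfl⟩ := hf; obtain ⟨b, hb, rfl⟩ := hg
  exact ⟨fun z => a z * (ψ z * b z), memHinf_mul ha (memHinf_mul hψ hb),
    by funext z; simp; ring⟩

lemma psiH_smul {ψ f : 𝔻 → ℂ} (c : ℂ) (hf : f ∈ psiH ψ) : c • f ∈ psiH ψ := by
  obtain ⟨a, ha, rfl⟩ := hf
  exact ⟨fun z => c * a z, memHinf_mul (memHinf_const c) ha, by funext z; simp; ring⟩

lemma autA (ψ : 𝔻 → ℂ) (hψ : MemHinf ψ) (hne : ∃ z, ψ z ≠ 0) (T : (𝔻 → ℂ) → (𝔻 → ℂ))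
    (hT : IsAlgAutOn (psiH ψ) T) :
    ∃ φ : 𝔻 → 𝔻, (∃ F : ℂ → ℂ, DifferentiableOn ℂ F (ball 0 1) ∧ ∀ z : 𝔻, F ↑z = ↑(φ z)) ∧
      ∀ f ∈ psiH ψ, ∀ w, T f w = f (φ w) := by
  obtain ⟨hmem, hadd, hsmul, hmul, hinj, hsurj⟩ := hT
  obtain ⟨z₀, hz₀⟩ := hne
  set ψ2 : 𝔻 → ℂ := fun z => ψ z * ψ z with hψ2
  have hψ2A : ψ2 ∈ psiH ψ := ⟨ψ, hψ, rfl⟩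
  set P : (𝔻 → ℂ) → (𝔻 → ℂ) := fun a => fun z => ψ z * (ψ z * a z) with hP
  have hPA : ∀ {a}, MemHinf a → P a ∈ psiH ψ := fun {a} ha =>
    ⟨fun z => ψ z * a z, memHinf_mul hψ ha, rfl⟩
  have hT0 : T 0 = 0 := by
    have h := hadd 0 (psiH_zero ψ) 0 (psiH_zero ψ)
    rw [add_zero] at h
    have := left_eq_add.mp h
    exact this
  set q2 : 𝔻 → ℂ := T ψ2 with hq2
  have hq2A : q2 ∈ psiH ψ := hmem _ hψ2A
  have hq2H : MemHinf q2 := psiH_memHinf hψ hq2A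
  obtain ⟨Q2, hQ2d, hQ2v⟩ := hq2H.1
  have hq2ne : ∃ w, q2 w ≠ 0 := by
    by_contra hall
    push_neg at hall
    have : ψ2 = 0 := by
      apply hinj hψ2A (psiH_zero ψ)
      rw [← hq2, hT0]
      funext w; exact hall w
    have := congrFun this z₀
    simp [hψ2] at this
    exact hz₀ this
  set q1 : 𝔻 → ℂ := T (P (fun z : 𝔻 => (z:ℂ))) with hq1
  have hq1A : q1 ∈ psiH ψ := hmem _ (hPA memHinf_id)
  obtain ⟨Q1, hQ1d, hQ1v⟩ := (psiH_memHinf hψ hq1A).1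
  set lam : 𝔻 → (𝔻 → ℂ) → ℂ := fun w a => T (P a) w / q2 w with hlam
  -- properties of lam at points where q2 ≠ 0
  have lam_const : ∀ w, q2 w ≠ 0 → ∀ c : ℂ, lam w (fun _ => c) = c := by
    intro w hw c
    have hPc : P (fun _ => c) = c • ψ2 := by
      funext z; simp [hP, hψ2, Pi.smul_apply, smul_eq_mul]; ring
    rw [hlam]
    simp only
    rw [hPc, hsmul c ψ2 hψ2A]
    simp [Pi.smul_apply, smul_eq_mul, ← hq2]
    field_simp
  have lam_add : ∀ w, q2 w ≠ 0 → ∀ a b, MemHinf a → MemHinf b →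
      lam w (fun z => a z + b z) = lam w a + lam w b := by
    intro w hw a b ha hb
    have hPab : P (fun z => a z + b z) = P a + P b := by
      funext z; simp [hP, Pi.add_apply]; ring
    rw [hlam]
    simp only
    rw [hPab, hadd _ (hPA ha) _ (hPA hb)]
    simp [Pi.add_apply]
    ring
  have lam_mul : ∀ w, q2 w ≠ 0 → ∀ a b, MemHinf a → MemHinf b →
      lam w (fun z => a z * b z) = lam w a * lam w b := by
    intro w hw a b ha hb
    have key : T (P (fun z => a z * b z)) w * q2 w = T (P a) w * T (P b) w := by
      have h1 : P (fun z => a z * b z) * ψ2 = P a * P b := by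
        funext z; simp [hP, hψ2, Pi.mul_apply]; ring
      have h2 : T (P (fun z => a z * b z) * ψ2) = T (P (fun z => a z * b z)) * T ψ2 :=
        hmul _ (hPA (memHinf_mul ha hb)) _ hψ2A
      have h3 : T (P a * P b) = T (P a) * T (P b) := hmul _ (hPA ha) _ (hPA hb)
      have := congrFun (h2.symm.trans (by rw [h1, h3])) w
      simpa [Pi.mul_apply, ← hq2] using this
    rw [hlam]
    simp only
    rw [div_mul_div_comm, div_eq_div_iff hw (mul_ne_zero hw hw)]
    ring_nf
    ring_nf at key
    linear_combination q2 w * key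
  have lam_ext : ∀ w, q2 w ≠ 0 → ∀ f ∈ psiH ψ, lam w f = T f w := by
    intro w hw f hf
    have h1 : P f = f * ψ2 := by
      funext z; simp [hP, hψ2, Pi.mul_apply]; ring
    have h2 : T (f * ψ2) = T f * T ψ2 := hmul _ hf _ hψ2A
    rw [hlam]
    simp only
    rw [h1, h2]
    simp [Pi.mul_apply, ← hq2]
    field_simp
  -- bound |q1 w| ≤ |q2 w|
  have habs : ∀ w, q2 w ≠ 0 → ‖q1 w‖ ≤ ‖q2 w‖ := by
    intro w hw
    have h := char_abs_le (lam w) (lam_add w hw) (lam_mul w hw) (lam_const w hw)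
      memHinf_id (M := 1) (fun z => z.norm_lt_one.le)
    have : lam w (fun z : 𝔻 => (z:ℂ)) = q1 w / q2 w := rfl
    rw [this, norm_div] at h
    rw [div_le_one (norm_pos_iff.mpr hw)] at h
    exact h
  have hne2 : ∃ x ∈ ball (0:ℂ) 1, Q2 x ≠ 0 := by
    obtain ⟨w, hw⟩ := hq2ne
    exact ⟨↑w, disc_mem_ball w, by rw [hQ2v]; exact hw⟩
  have hle : ∀ x ∈ ball (0:ℂ) 1, Q2 x ≠ 0 → ‖Q1 x‖ ≤ ‖Q2 x‖ := by
    intro x hx hx0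
    obtain ⟨w, rfl⟩ := ball_coe hx
    rw [hQ1v, hQ2v]
    rw [hQ2v] at hx0
    exact habs w hx0
  obtain ⟨F, hFd, hFprop⟩ := aux_div hQ1d hQ2d hne2 hle
  have hFval : ∀ w : 𝔻, q2 w ≠ 0 → q1 w / q2 w = F ↑w := by
    intro w hw
    have := (hFprop ↑w (disc_mem_ball w)).2
    rw [hQ1v, hQ2v] at this
    rw [this]
    field_simp
  by_cases hcon : ∃ w0 : 𝔻, ‖F ↑w0‖ = 1
  · -- constant unimodular case: contradiction
    exfalso
    obtain ⟨w0, hw0⟩ := hcon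
    have hmax : IsMaxOn (norm ∘ F) (ball (0:ℂ) 1) ↑w0 := by
      intro x hx
      simp only [Function.comp_apply]
      rw [hw0]
      exact (hFprop x hx).1
    have hconstF := Complex.eqOn_of_isPreconnected_of_isMaxOn_norm
      (convex_ball (0:ℂ) 1).isPreconnected isOpen_ball hFd (disc_mem_ball w0) hmax
    set c : ℂ := F ↑w0 with hc
    have hsubc : MemHinf (fun z : 𝔻 => (z:ℂ) - c) := by
      have h := memHinf_add memHinf_id (memHinf_const (-c))
      have heq : (fun z : 𝔻 => (z:ℂ) + (fun _ : 𝔻 => -c) z) = (fun z : 𝔻 => (z:ℂ) - c) := by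
        funext z; ring
      rwa [heq] at h
    set h : 𝔻 → ℂ := P (fun z : 𝔻 => (z:ℂ) - c) with hh
    have hhA : h ∈ psiH ψ := hPA hsubc
    have hTh0 : ∀ w, q2 w ≠ 0 → T h w = 0 := by
      intro w hw
      have hlamh : lam w (fun z : 𝔻 => (z:ℂ) - c) = 0 := by
        have heq : (fun z : 𝔻 => (z:ℂ) - c) = (fun z : 𝔻 => (z:ℂ) + (fun _ : 𝔻 => -c) z) := by
          funext z; ring
        rw [heq, lam_add w hw _ _ memHinf_id (memHinf_const (-c)), lam_const w hw]
        have hid : lam w (fun z : 𝔻 => (z:ℂ)) = c := by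
          have h1 : lam w (fun z : 𝔻 => (z:ℂ)) = q1 w / q2 w := rfl
          rw [h1, hFval w hw]
          exact (hconstF (disc_mem_ball w)).symm ▸ rfl
        rw [hid]
        ring
      have : lam w (fun z : 𝔻 => (z:ℂ) - c) = T h w / q2 w := rfl
      rw [this] at hlamh
      field_simp at hlamh
      simpa using hlamh
    -- T h vanishes everywhere by the identity principle
    obtain ⟨H1, hH1d, hH1v⟩ := (psiH_memHinf hψ (hmem _ hhA)).1
    have hzero : ∀ x ∈ ball (0:ℂ) 1, H1 x = (fun _ => (0:ℂ)) x := by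
      apply aux_ident hH1d (differentiableOn_const 0) hQ2d hne2
      intro x hx hx0
      obtain ⟨w, rfl⟩ := ball_coe hx
      rw [hH1v]
      rw [hQ2v] at hx0
      exact hTh0 w hx0
    have hTh : T h = 0 := by
      funext w
      have := hzero ↑w (disc_mem_ball w)
      rw [hH1v] at this
      exact this
    have hh0 : h = 0 := hinj hhA (psiH_zero ψ) (by rw [hTh, hT0])
    have := congrFun hh0 z₀
    simp only [hh, hP, Pi.zero_apply] at this
    have hz0c : (z₀:ℂ) - c ≠ 0 := by
      intro hq
      rw [sub_eq_zero] at hq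
      have h1 : ‖((z₀:ℂ))‖ < 1 := z₀.norm_lt_one
      rw [hq] at h1
      have habsc : ‖c‖ = 1 := by exact hw0
      rw [habsc] at h1
      exact lt_irrefl 1 h1
    have := mul_eq_zero.mp this
    rcases this with h1 | h1
    · exact hz₀ h1
    · rcases mul_eq_zero.mp h1 with h2 | h2
      · exact hz₀ h2
      · exact hz0c h2
  · -- the good case: F maps the disc strictly inside itself
    push_neg at hcon
    have hlt : ∀ z : 𝔻, ‖F ↑z‖ < 1 := by
      intro z
      have h1 := (hFprop ↑z (disc_mem_ball z)).1
      rcases lt_or_eq_of_le h1 with h | h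
      · exact h
      · exact absurd h (hcon z)
    set φ : 𝔻 → 𝔻 := fun z => Complex.UnitDisc.mk (F ↑z) (hlt z) with hφ
    have hφcoe : ∀ z : 𝔻, F ↑z = ↑(φ z) := fun z => rfl
    refine ⟨φ, ⟨F, hFd, hφcoe⟩, ?_⟩
    intro f hf
    have hfH : MemHinf f := psiH_memHinf hψ hf
    have hpt : ∀ w, q2 w ≠ 0 → T f w = f (φ w) := by
      intro w hw
      rw [← lam_ext w hw f hf]
      apply char_eval (lam w) (lam_add w hw) (lam_mul w hw) (lam_const w hw) (φ w) _ hfH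
      have h1 : lam w (fun z : 𝔻 => (z:ℂ)) = q1 w / q2 w := rfl
      rw [h1, hFval w hw]
      exact hφcoe w
    intro w
    obtain ⟨FT, hFTd, hFTv⟩ := (psiH_memHinf hψ (hmem f hf)).1
    have hcomp : MemHinf (fun z => f (φ z)) := memHinf_comp hfH φ hFd hφcoe
    obtain ⟨FC, hFCd, hFCv⟩ := hcomp.1
    have hkey : ∀ x ∈ ball (0:ℂ) 1, FT x = FC x := by
      apply aux_ident hFTd hFCd hQ2d hne2
      intro x hx hx0
      obtain ⟨v, rfl⟩ := ball_coe hx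
      rw [hFTv, hFCv]
      rw [hQ2v] at hx0
      exact hpt v hx0
    have := hkey ↑w (disc_mem_ball w)
    rw [hFTv, hFCv] at this
    exact this

lemma inv_holo (φ : 𝔻 → 𝔻) {F : ℂ → ℂ}
    (hFd : DifferentiableOn ℂ F (ball 0 1)) (hFv : ∀ z : 𝔻, F ↑z = ↑(φ z))
    (σ : 𝔻 → 𝔻) (hσl : ∀ z, φ (σ z) = z) (hσr : ∀ z, σ (φ z) = z) :
    ∃ G : ℂ → ℂ, DifferentiableOn ℂ G (ball 0 1) ∧ ∀ z : 𝔻, G ↑z = ↑(σ z) := by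
  classical
  set G : ℂ → ℂ := fun x =>
    if h : ‖x‖ < 1 then (↑(σ (Complex.UnitDisc.mk x h)) : ℂ) else 0 with hG
  have hGv : ∀ z : 𝔻, G ↑z = ↑(σ z) := by
    intro z
    rw [hG]
    simp only [dif_pos z.norm_lt_one, Complex.UnitDisc.mk_coe]
  have hGball : ∀ x ∈ ball (0:ℂ) 1, G x ∈ ball (0:ℂ) 1 := by
    intro x hx; obtain ⟨z, rfl⟩ := ball_coe hx; rw [hGv]; exact disc_mem_ball _
  have hFG : ∀ x ∈ ball (0:ℂ) 1, F (G x) = x := by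
    intro x hx; obtain ⟨z, rfl⟩ := ball_coe hx
    rw [hGv, hFv, hσl]
  have hFinj : ∀ x ∈ ball (0:ℂ) 1, ∀ y ∈ ball (0:ℂ) 1, F x = F y → x = y := by
    intro x hx y hy h
    obtain ⟨z, rfl⟩ := ball_coe hx; obtain ⟨w, rfl⟩ := ball_coe hy
    rw [hFv, hFv] at h
    have : φ z = φ w := Complex.UnitDisc.coe_injective h
    have : z = w := by
      have := congrArg σ this; rwa [hσr, hσr] at this
    rw [this]
  have hanF : AnalyticOnNhd ℂ F (ball 0 1) := hFd.analyticOnNhd isOpen_ball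
  -- two distinct points of the disc
  have htwo : (Complex.UnitDisc.mk 0 (by simp) : 𝔻) ≠ Complex.UnitDisc.mk (1/2) (by norm_num) := by
    intro h
    have := congrArg (fun z : 𝔻 => (z:ℂ)) h
    norm_num at this
  have hnotconst : ∀ c ∈ ball (0:ℂ) 1, ¬ (∀ᶠ z in 𝓝 c, F z = F c) := by
    intro c hc hev
    have := hanF.eqOn_of_preconnected_of_eventuallyEq (g := fun _ => F c) analyticOnNhd_const
      (convex_ball (0:ℂ) 1).isPreconnected hc hev
    have h1 := this (disc_mem_ball (Complex.UnitDisc.mk 0 (by simp)))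
    have h2 := this (disc_mem_ball (Complex.UnitDisc.mk (1/2) (by norm_num)))
    have h3 : F (↑(Complex.UnitDisc.mk 0 (by simp) : 𝔻)) = F (↑(Complex.UnitDisc.mk (1/2) (by norm_num) : 𝔻)) := by
      rw [h1, h2]
    exact htwo (Complex.UnitDisc.coe_injective (by
      have := hFinj _ (disc_mem_ball _) _ (disc_mem_ball _) h3
      exact_mod_cast this))
  have hopen : ∀ c ∈ ball (0:ℂ) 1, 𝓝 (F c) ≤ map F (𝓝 c) := fun c hc =>
    ((hanF c hc).eventually_constant_or_nhds_le_map_nhds).resolve_left (hnotconst c hc)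
  -- continuity of G on the ball
  have hGcont : ∀ c ∈ ball (0:ℂ) 1, ContinuousAt G c := by
    intro c hc
    have hGc : G c ∈ ball (0:ℂ) 1 := hGball c hc
    have hFGc : F (G c) = c := hFG c hc
    rw [ContinuousAt, Metric.tendsto_nhds]
    intro ε hε
    set W : Set ℂ := ball (G c) ε ∩ ball (0:ℂ) 1 with hW
    have hWnhds : W ∈ 𝓝 (G c) :=
      inter_mem (ball_mem_nhds _ hε) (isOpen_ball.mem_nhds hGc)
    have himg : F '' W ∈ 𝓝 c := by
      have : F '' W ∈ map F (𝓝 (G c)) :=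
        image_mem_map hWnhds
      rw [← hFGc]
      exact hopen (G c) hGc this
    filter_upwards [himg, isOpen_ball.eventually_mem (show c ∈ ball (0:ℂ) 1 from hc)]
      with x hx hxball
    obtain ⟨y, hyW, hyx⟩ := hx
    have hGx : G x = y := by
      apply hFinj _ (hGball x hxball) _ hyW.2
      rw [hFG x hxball, hyx]
    rw [hGx]
    exact hyW.1
  -- differentiability where the derivative doesn't vanish
  have hkey : ∀ c ∈ ball (0:ℂ) 1, deriv F (G c) ≠ 0 → DifferentiableAt ℂ G c := by
    intro c hc hd0
    set a := G c with ha
    have haball : a ∈ ball (0:ℂ) 1 := hGball c hc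
    have hFa : F a = c := hFG c hc
    obtain ⟨p, hp⟩ := hanF a haball
    have hsd0 : HasStrictDerivAt F (p 1 fun _ => 1) a := hp.hasStrictDerivAt
    have hderiv : deriv F a = p 1 fun _ => 1 := hsd0.hasDerivAt.deriv
    have hsd : HasStrictDerivAt F (deriv F a) a := hderiv ▸ hsd0
    have heqv := hsd.hasStrictFDerivAt_equiv hd0
    set linv := heqv.localInverse with hlinv
    have hlc : ContinuousAt linv (F a) := heqv.localInverse_continuousAt
    have hla : linv (F a) = a := heqv.localInverse_apply_image
    have hrinv : ∀ᶠ y in 𝓝 (F a), F (linv y) = y := heqv.eventually_right_inverse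
    have hdiff : DifferentiableAt ℂ linv (F a) := heqv.to_localInverse.differentiableAt
    have hev : G =ᶠ[𝓝 c] linv := by
      rw [← hFa]
      have h1 : ∀ᶠ y in 𝓝 (F a), linv y ∈ ball (0:ℂ) 1 := by
        have : ContinuousAt linv (F a) := hlc
        apply this.eventually_mem
        rw [hla]
        exact isOpen_ball.mem_nhds haball
      have h2 : ∀ᶠ y in 𝓝 (F a), y ∈ ball (0:ℂ) 1 := by
        rw [hFa]
        exact isOpen_ball.eventually_mem hc
      filter_upwards [hrinv, h1, h2] with y hy1 hy2 hy3
      apply hFinj _ (hGball y hy3) _ hy2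
      rw [hFG y hy3, hy1]
    exact (hFa ▸ hdiff).congr_of_eventuallyEq hev
  -- derivative is not identically zero
  have hderiv_an : AnalyticOnNhd ℂ (deriv F) (ball 0 1) := hanF.deriv
  have hderiv_ne : ∃ x ∈ ball (0:ℂ) 1, deriv F x ≠ 0 := by
    by_contra hall
    push_neg at hall
    have hconst : ∀ x ∈ ball (0:ℂ) 1, F x = F 0 := by
      intro x hx
      have hc : Convex ℝ (ball (0:ℂ) 1) := convex_ball _ _
      have := hc.is_const_of_fderivWithin_eq_zero (𝕜 := ℂ) hFd ?_ hx
        (by simp : (0:ℂ) ∈ ball (0:ℂ) 1)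
      · exact this
      · intro y hy
        rw [fderivWithin_of_isOpen isOpen_ball hy]
        have hDA : DifferentiableAt ℂ F y := hFd.differentiableAt (isOpen_ball.mem_nhds hy)
        have h0 : HasDerivAt F 0 y := hall y hy ▸ hDA.hasDerivAt
        have := h0.hasFDerivAt.fderiv
        rw [this]
        ext w
        simp
    have h3 : F (↑(Complex.UnitDisc.mk 0 (by simp) : 𝔻)) = F (↑(Complex.UnitDisc.mk (1/2) (by norm_num) : 𝔻)) := by
      rw [hconst _ (disc_mem_ball _), hconst _ (disc_mem_ball _)]
    exact htwo (by
      have := hFinj _ (disc_mem_ball _) _ (disc_mem_ball _) h3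
      exact Complex.UnitDisc.coe_injective (by exact_mod_cast this))
  -- full differentiability
  refine ⟨G, fun c hc => ?_, hGv⟩
  by_cases hd0 : deriv F (G c) ≠ 0
  · exact (hkey c hc hd0).differentiableWithinAt
  push_neg at hd0
  have haball : G c ∈ ball (0:ℂ) 1 := hGball c hc
  obtain ⟨t, ht, hts⟩ := eventually_nhdsWithin_iff.mp
    (aux_punct hderiv_an.differentiableOn hderiv_ne haball) |>.exists_mem
  have hev1 : ∀ᶠ x in 𝓝 c, G x ∈ interior t :=
    (hGcont c hc).eventually_mem (isOpen_interior.mem_nhds (mem_interior_iff_mem_nhds.2 ht))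
  have hev2 : ∀ᶠ x in 𝓝 c, x ∈ ball (0:ℂ) 1 := isOpen_ball.eventually_mem hc
  obtain ⟨V, hVnhds, hVprop⟩ := (hev1.and hev2).exists_mem
  have hdOn : DifferentiableOn ℂ G (V \ {c}) := by
    intro x hx
    have hxball : x ∈ ball (0:ℂ) 1 := (hVprop x hx.1).2
    have hGxt : G x ∈ interior t := (hVprop x hx.1).1
    have hGxne : G x ≠ G c := by
      intro h
      apply hx.2
      have := hFG x hxball
      rw [h, hFG c hc] at this
      simp [this]
    have hd : deriv F (G x) ≠ 0 := (hts (G x) (interior_subset hGxt) hGxne).2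
    exact (hkey x hxball hd).differentiableWithinAt
  have := (Complex.differentiableOn_compl_singleton_and_continuousAt_iff hVnhds).mp
    ⟨hdOn, hGcont c hc⟩
  exact (this.differentiableAt hVnhds).differentiableWithinAt

lemma forward (ψ : 𝔻 → ℂ) (hψ : MemHinf ψ) (hne : ∃ z, ψ z ≠ 0)
    (T : (𝔻 → ℂ) → (𝔻 → ℂ)) (hT : IsAlgAutOn (psiH ψ) T) :
    ∃ φ : 𝔻 → 𝔻, IsDiscAut φ ∧
      (∃ g : 𝔻 → ℂ, InvHinf g ∧ ∀ z, ψ (φ z) = ψ z * g z) ∧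
      ∀ f ∈ psiH ψ, T f = f ∘ φ := by
  obtain ⟨hmem, hadd, hsmul, hmul, hinj, hsurj⟩ := hT
  have hT' : IsAlgAutOn (psiH ψ) T := ⟨hmem, hadd, hsmul, hmul, hinj, hsurj⟩
  obtain ⟨z₀, hz₀⟩ := hne
  obtain ⟨φ, ⟨F, hFd, hFv⟩, hTf⟩ := autA ψ hψ ⟨z₀, hz₀⟩ T hT'
  obtain ⟨Ψ, hΨd, hΨv⟩ := hψ.1
  have hΨne : ∃ x ∈ ball (0:ℂ) 1, Ψ x ≠ 0 := ⟨↑z₀, disc_mem_ball z₀, by rw [hΨv]; exact hz₀⟩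
  -- the inverse map
  set T' : (𝔻 → ℂ) → (𝔻 → ℂ) := Function.invFunOn T (psiH ψ) with hT'def
  have hex : ∀ f ∈ psiH ψ, ∃ a ∈ psiH ψ, T a = f := by
    intro f hf
    obtain ⟨a, ha, hab⟩ := hsurj hf
    exact ⟨a, ha, hab⟩
  have hT'mem : ∀ f ∈ psiH ψ, T' f ∈ psiH ψ := fun f hf =>
    Function.invFunOn_mem (hex f hf)
  have hT'inv1 : ∀ f ∈ psiH ψ, T (T' f) = f := fun f hf =>
    Function.invFunOn_eq (hex f hf)
  have hT'inv2 : ∀ g ∈ psiH ψ, T' (T g) = g := fun g hg =>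
    hinj.leftInvOn_invFunOn hg
  have hT'A : IsAlgAutOn (psiH ψ) T' := by
    refine ⟨hT'mem, ?_, ?_, ?_, ?_, ?_⟩
    · intro f hf g hg
      apply hinj (hT'mem _ (psiH_add hf hg)) (psiH_add (hT'mem f hf) (hT'mem g hg))
      rw [hT'inv1 _ (psiH_add hf hg), hadd _ (hT'mem f hf) _ (hT'mem g hg),
        hT'inv1 f hf, hT'inv1 g hg]
    · intro c f hf
      apply hinj (hT'mem _ (psiH_smul c hf)) (psiH_smul c (hT'mem f hf))
      rw [hT'inv1 _ (psiH_smul c hf), hsmul c _ (hT'mem f hf), hT'inv1 f hf]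
    · intro f hf g hg
      apply hinj (hT'mem _ (psiH_mul hψ hf hg)) (psiH_mul hψ (hT'mem f hf) (hT'mem g hg))
      rw [hT'inv1 _ (psiH_mul hψ hf hg), hmul _ (hT'mem f hf) _ (hT'mem g hg),
        hT'inv1 f hf, hT'inv1 g hg]
    · intro f hf g hg h
      rw [← hT'inv1 f hf, ← hT'inv1 g hg, h]
    · intro f hf
      exact ⟨T f, hmem f hf, hT'inv2 f hf⟩
  obtain ⟨φ', ⟨F', hF'd, hF'v⟩, hT'f⟩ := autA ψ hψ ⟨z₀, hz₀⟩ T' hT'A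
  -- the two composites are the identity on the nonvanishing set of ψ
  have hcomp1 : ∀ f ∈ psiH ψ, ∀ w, f (φ (φ' w)) = f w := by
    intro f hf w
    have h1 := hT'f (T f) (hmem f hf) w
    rw [hT'inv2 f hf] at h1
    rw [hTf f hf (φ' w)] at h1
    exact h1.symm
  have hcomp2 : ∀ f ∈ psiH ψ, ∀ w, f (φ' (φ w)) = f w := by
    intro f hf w
    have h1 := hTf (T' f) (hT'mem f hf) w
    rw [hT'inv1 f hf] at h1
    rw [hT'f f hf (φ w)] at h1
    exact h1.symm
  set ψ2 : 𝔻 → ℂ := fun z => ψ z * ψ z with hψ2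
  have hψ2A : ψ2 ∈ psiH ψ := ⟨ψ, hψ, rfl⟩
  set ψ2id : 𝔻 → ℂ := fun z => ψ z * (ψ z * (z:ℂ)) with hψ2id
  have hψ2idA : ψ2id ∈ psiH ψ := ⟨fun z => ψ z * (z:ℂ), memHinf_mul hψ memHinf_id, rfl⟩
  have hptid : ∀ (u w : 𝔻), ψ w ≠ 0 → ψ2 u = ψ2 w → ψ2id u = ψ2id w → u = w := by
    intro u w hw e1 e2
    apply Complex.UnitDisc.coe_injective
    simp only [hψ2] at e1
    simp only [hψ2id] at e2
    have e2' : (ψ w * ψ w) * (u:ℂ) = (ψ w * ψ w) * (w:ℂ) := by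
      calc (ψ w * ψ w) * (u:ℂ) = ψ u * (ψ u * (u:ℂ)) := by rw [← e1]; ring
        _ = ψ w * (ψ w * (w:ℂ)) := e2
        _ = (ψ w * ψ w) * (w:ℂ) := by ring
    exact mul_left_cancel₀ (mul_ne_zero hw hw) e2'
  have hid1 : ∀ w, φ (φ' w) = w := by
    have hmaps' : ∀ x ∈ ball (0:ℂ) 1, F' x ∈ ball (0:ℂ) 1 := by
      intro x hx; obtain ⟨w, rfl⟩ := ball_coe hx; rw [hF'v]; exact disc_mem_ball _
    have hd : DifferentiableOn ℂ (F ∘ F') (ball 0 1) := hFd.comp hF'd hmaps'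
    have key : ∀ x ∈ ball (0:ℂ) 1, (F ∘ F') x = id x := by
      apply aux_ident hd differentiableOn_id hΨd hΨne
      intro x hx hx0
      obtain ⟨w, rfl⟩ := ball_coe hx
      rw [hΨv] at hx0
      have hw : ψ w ≠ 0 := hx0
      have := hptid (φ (φ' w)) w hw (hcomp1 ψ2 hψ2A w) (hcomp1 ψ2id hψ2idA w)
      simp only [Function.comp_apply, id_eq, hF'v, hFv]
      rw [this]
    intro w
    apply Complex.UnitDisc.coe_injective
    have := key ↑w (disc_mem_ball w)
    simpa [Function.comp, hF'v, hFv] using this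
  have hid2 : ∀ w, φ' (φ w) = w := by
    have hmaps : ∀ x ∈ ball (0:ℂ) 1, F x ∈ ball (0:ℂ) 1 := by
      intro x hx; obtain ⟨w, rfl⟩ := ball_coe hx; rw [hFv]; exact disc_mem_ball _
    have hd : DifferentiableOn ℂ (F' ∘ F) (ball 0 1) := hF'd.comp hFd hmaps
    have key : ∀ x ∈ ball (0:ℂ) 1, (F' ∘ F) x = id x := by
      apply aux_ident hd differentiableOn_id hΨd hΨne
      intro x hx hx0
      obtain ⟨w, rfl⟩ := ball_coe hx
      rw [hΨv] at hx0
      have := hptid (φ' (φ w)) w hx0 (hcomp2 ψ2 hψ2A w) (hcomp2 ψ2id hψ2idA w)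
      simp only [Function.comp_apply, id_eq, hFv, hF'v]
      rw [this]
    intro w
    apply Complex.UnitDisc.coe_injective
    have := key ↑w (disc_mem_ball w)
    simpa [Function.comp, hFv, hF'v] using this
  have hbij : Function.Bijective φ :=
    Function.bijective_iff_has_inverse.mpr ⟨φ', hid2, hid1⟩
  -- the invertible factor g
  have hψA : ψ ∈ psiH ψ := ⟨fun _ => 1, memHinf_const 1, by funext z; simp⟩
  obtain ⟨g, hgH, hTψ⟩ := hmem ψ hψA
  have hgval : ∀ z, ψ (φ z) = ψ z * g z := by
    intro z
    have h1 := hTf ψ hψA z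
    rw [hTψ] at h1
    exact h1.symm
  obtain ⟨h', hh'H, hT'ψ⟩ := hT'mem ψ hψA
  have hh'val : ∀ z, ψ (φ' z) = ψ z * h' z := by
    intro z
    have h1 := hT'f ψ hψA z
    rw [hT'ψ] at h1
    exact h1.symm
  set hcmp : 𝔻 → ℂ := fun z => h' (φ z) with hhc
  have hhH : MemHinf hcmp := memHinf_comp hh'H φ hFd hFv
  have hgh : ∀ z, g z * hcmp z = 1 := by
    obtain ⟨Gg, hGgd, hGgv⟩ := hgH.1
    obtain ⟨Hh, hHhd, hHhv⟩ := hh'H.1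
    have hmaps : ∀ x ∈ ball (0:ℂ) 1, F x ∈ ball (0:ℂ) 1 := by
      intro x hx; obtain ⟨w, rfl⟩ := ball_coe hx; rw [hFv]; exact disc_mem_ball _
    have hd : DifferentiableOn ℂ (fun x => Gg x * Hh (F x)) (ball 0 1) :=
      hGgd.mul (hHhd.comp hFd hmaps)
    have key : ∀ x ∈ ball (0:ℂ) 1, (fun x => Gg x * Hh (F x)) x = (fun _ => (1:ℂ)) x := by
      apply aux_ident hd (differentiableOn_const 1) hΨd hΨne
      intro x hx hx0
      obtain ⟨w, rfl⟩ := ball_coe hx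
      rw [hΨv] at hx0
      show Gg ↑w * Hh (F ↑w) = 1
      rw [hGgv, hFv, hHhv]
      have e1 : ψ w = ψ w * (g w * h' (φ w)) := by
        calc ψ w = ψ (φ' (φ w)) := by rw [hid2]
          _ = ψ (φ w) * h' (φ w) := hh'val (φ w)
          _ = (ψ w * g w) * h' (φ w) := by rw [hgval]
          _ = ψ w * (g w * h' (φ w)) := by ring
      have e2 : ψ w * 1 = ψ w * (g w * h' (φ w)) := by rw [mul_one]; exact e1
      exact (mul_left_cancel₀ hx0 e2).symm
    intro z
    have h3 : Gg ↑z * Hh (F ↑z) = 1 := key ↑z (disc_mem_ball z)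
    rw [hGgv, hFv, hHhv] at h3
    exact h3
  exact ⟨φ, ⟨⟨F, hFd, hFv⟩, hbij⟩, ⟨g, ⟨hgH, hcmp, hhH, hgh⟩, hgval⟩,
    fun f hf => funext fun w => hTf f hf w⟩

lemma backward (ψ : 𝔻 → ℂ) (hψ : MemHinf ψ)
    (T : (𝔻 → ℂ) → (𝔻 → ℂ)) (φ : 𝔻 → 𝔻) (hφ : IsDiscAut φ)
    (g : 𝔻 → ℂ) (hg : InvHinf g) (hgval : ∀ z, ψ (φ z) = ψ z * g z)
    (hTf : ∀ f ∈ psiH ψ, T f = f ∘ φ) :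
    IsAlgAutOn (psiH ψ) T := by
  obtain ⟨⟨F, hFd, hFv⟩, hbij⟩ := hφ
  obtain ⟨hgH, h, hhH, hgh⟩ := hg
  set σ : 𝔻 → 𝔻 := Function.surjInv hbij.surjective with hσ
  have hσl : ∀ z, φ (σ z) = z := fun z => Function.surjInv_eq hbij.surjective z
  have hσr : ∀ z, σ (φ z) = z := fun z => hbij.injective (hσl (φ z))
  obtain ⟨G, hGd, hGv⟩ := inv_holo φ hFd hFv σ hσl hσr
  have hmem : ∀ f ∈ psiH ψ, T f ∈ psiH ψ := by
    intro f hf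
    rw [hTf f hf]
    obtain ⟨a, ha, rfl⟩ := hf
    refine ⟨fun z => g z * a (φ z), memHinf_mul hgH (memHinf_comp ha φ hFd hFv), ?_⟩
    funext z
    simp only [Function.comp_apply]
    rw [hgval z]
    ring
  refine ⟨hmem, ?_, ?_, ?_, ?_, ?_⟩
  · intro f hf g' hg'
    rw [hTf f hf, hTf g' hg', hTf (f + g') (psiH_add hf hg')]
    funext z
    simp [Function.comp_apply, Pi.add_apply]
  · intro c f hf
    rw [hTf f hf, hTf (c • f) (psiH_smul c hf)]
    funext z
    simp [Function.comp_apply, Pi.smul_apply]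
  · intro f hf g' hg'
    rw [hTf f hf, hTf g' hg', hTf (f * g') (psiH_mul hψ hf hg')]
    funext z
    simp [Function.comp_apply, Pi.mul_apply]
  · intro f hf g' hg' heq
    rw [hTf f hf, hTf g' hg'] at heq
    funext z
    have := congrFun heq (σ z)
    simpa [Function.comp_apply, hσl z] using this
  · intro f hf
    obtain ⟨a, ha, rfl⟩ := hf
    have hψσ : ∀ z, ψ (σ z) = ψ z * h (σ z) := by
      intro z
      calc ψ (σ z) = ψ (σ z) * (g (σ z) * h (σ z)) := by rw [hgh]; ring
        _ = (ψ (σ z) * g (σ z)) * h (σ z) := by ring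
        _ = ψ (φ (σ z)) * h (σ z) := by rw [hgval]
        _ = ψ z * h (σ z) := by rw [hσl]
    set fσ : 𝔻 → ℂ := fun z => ψ z * (h (σ z) * a (σ z)) with hfσ
    have hfσA : fσ ∈ psiH ψ :=
      ⟨fun z => h (σ z) * a (σ z),
        memHinf_mul (memHinf_comp hhH σ hGd hGv) (memHinf_comp ha σ hGd hGv), rfl⟩
    refine ⟨fσ, hfσA, ?_⟩
    rw [hTf fσ hfσA]
    funext z
    simp only [Function.comp_apply, hfσ]
    rw [hσr z]
    rw [hgval z]
    linear_combination ψ z * a z * hgh z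

end AuxLemmas

/-- for `ψ ∈ H^∞` not identically zero, `T` is an algebra automorphism of
`ψ H^∞` iff `T = C_φ` for some `φ ∈ Aut(𝔻)` with `ψ ∘ φ = ψ · g`, `g` invertible in `H^∞`. -/
theorem stmt_10 (ψ : 𝔻 → ℂ) (hψ : MemHinf ψ) (hne : ∃ z, ψ z ≠ 0)
    (T : (𝔻 → ℂ) → (𝔻 → ℂ)) :
    IsAlgAutOn (psiH ψ) T ↔
      ∃ φ : 𝔻 → 𝔻, IsDiscAut φ ∧
        (∃ g : 𝔻 → ℂ, InvHinf g ∧ ∀ z, ψ (φ z) = ψ z * g z) ∧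
        ∀ f ∈ psiH ψ, T f = f ∘ φ := by
  constructor
  · exact fun hT => forward ψ hψ hne T hT
  · rintro ⟨φ, hφ, ⟨g, hg, hgval⟩, hTf⟩
    exact backward ψ hψ T φ hφ g hg hgval hTf
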